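/- Let h : ℝⁿ → ℝ be L-smooth and σ-hypoconvex with -L < σ ≤ 0. Then for all x, y ∈ ℝⁿ: h(y) ≥ h(x) + ⟨∇h(x), y - x⟩ + (σL/(2(L+σ)))‖y-x‖² + (1/(2(L+σ)))‖∇h(y) - ∇h(x)‖². -/

import Mathlib

open Set Filter RealInnerProductSpace

section Aux

variable {n : ℕ}

/-- Derivative of a function along a line. -/
private lemma line_hasDerivAt (f : EuclideanSpace ℝ (Fin n) → ℝ)
    (hf : Differentiable ℝ f) (a d : EuclideanSpace ℝ (Fin n)) (t : ℝ) :
    HasDerivAt (fun s : ℝ => f (a + s • d)) ⟪gradient f (a + t • d), d⟫ t := by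
  have hline : HasDerivAt (fun s : ℝ => a + s • d) d t := by
    simpa using ((hasDerivAt_id t).smul_const d).const_add a
  have hg : HasFDerivAt f (InnerProductSpace.toDual ℝ _ (gradient f (a + t • d))) (a + t • d) :=
    (hf (a + t • d)).hasGradientAt
  simpa [InnerProductSpace.toDual_apply_apply, Function.comp_def] using hg.comp_hasDerivAt t hline

private lemma grad_continuous (f : EuclideanSpace ℝ (Fin n) → ℝ) (hf : ContDiff ℝ 1 f) :
    Continuous (gradient f) := by
  have : Continuous (fderiv ℝ f) := hf.continuous_fderiv one_ne_zero
  exact (InnerProductSpace.toDual ℝ _).symm.continuous.comp this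

/-- Descent lemma for functions with Lipschitz gradient. -/
private lemma descent (f : EuclideanSpace ℝ (Fin n) → ℝ) (hf : ContDiff ℝ 1 f) (M : ℝ)
    (hLip : ∀ x y, ‖gradient f x - gradient f y‖ ≤ M * ‖x - y‖)
    (a b : EuclideanSpace ℝ (Fin n)) :
    f b ≤ f a + ⟪gradient f a, b - a⟫ + M / 2 * ‖b - a‖ ^ 2 := by
  set d := b - a with hd
  have hdiff := hf.differentiable one_ne_zero
  have key : ∀ t : ℝ, HasDerivAt (fun s => f (a + s • d)) ⟪gradient f (a + t • d), d⟫ t :=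
    line_hasDerivAt f hdiff a d
  have hcont : Continuous fun t : ℝ => ⟪gradient f (a + t • d), d⟫ := by
    apply Continuous.inner
    · exact (grad_continuous f hf).comp (by continuity)
    · exact continuous_const
  have eb : a + (1:ℝ) • d = b := by rw [one_smul, hd]; abel
  have ea : a + (0:ℝ) • d = a := by rw [zero_smul, add_zero]
  have h1 : (∫ t in (0:ℝ)..1, ⟪gradient f (a + t • d), d⟫) = f b - f a := by
    have := intervalIntegral.integral_eq_sub_of_hasDerivAt (a := (0:ℝ)) (b := (1:ℝ))
      (f := fun s : ℝ => f (a + s • d)) (f' := fun t => ⟪gradient f (a + t • d), d⟫)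
      (fun t _ => key t) (hcont.intervalIntegrable _ _)
    simpa only [eb, ea] using this
  have hbound : ∀ t ∈ Icc (0:ℝ) 1,
      ⟪gradient f (a + t • d), d⟫ ≤ ⟪gradient f a, d⟫ + M * ‖d‖ ^ 2 * t := by
    intro t ht
    have h2 : ⟪gradient f (a + t • d), d⟫ - ⟪gradient f a, d⟫
        = ⟪gradient f (a + t • d) - gradient f a, d⟫ := by
      rw [inner_sub_left]
    have h3 : ⟪gradient f (a + t • d) - gradient f a, d⟫
        ≤ ‖gradient f (a + t • d) - gradient f a‖ * ‖d‖ := real_inner_le_norm _ _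
    have h4 : ‖gradient f (a + t • d) - gradient f a‖ ≤ M * ‖t • d‖ := by
      have := hLip (a + t • d) a
      simpa using this
    have h5 : ‖t • d‖ = t * ‖d‖ := by
      rw [norm_smul, Real.norm_eq_abs, abs_of_nonneg ht.1]
    rw [h5] at h4
    have h6 := mul_le_mul_of_nonneg_right h4 (norm_nonneg d)
    nlinarith [h2, h3, h6]
  have hint : (∫ t in (0:ℝ)..1, ⟪gradient f (a + t • d), d⟫)
      ≤ ∫ t in (0:ℝ)..1, (⟪gradient f a, d⟫ + M * ‖d‖ ^ 2 * t) := by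
    apply intervalIntegral.integral_mono_on (by norm_num) (hcont.intervalIntegrable _ _)
    · exact (continuous_const.add (continuous_const.mul continuous_id)).intervalIntegrable _ _
    · exact hbound
  have h6 : (∫ t in (0:ℝ)..1, (⟪gradient f a, d⟫ + M * ‖d‖ ^ 2 * t))
      = ⟪gradient f a, d⟫ + M / 2 * ‖d‖ ^ 2 := by
    rw [intervalIntegral.integral_add intervalIntegrable_const
      (intervalIntegral.intervalIntegrable_id.const_mul _)]
    rw [intervalIntegral.integral_const_mul, integral_id, intervalIntegral.integral_const]
    norm_num
    ring
  rw [h1, h6] at hint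
  linarith

/-- First-order condition for convexity. -/
private lemma convex_grad_ineq (f : EuclideanSpace ℝ (Fin n) → ℝ) (hf : Differentiable ℝ f)
    (hc : ConvexOn ℝ univ f) (a b : EuclideanSpace ℝ (Fin n)) :
    f a + ⟪gradient f a, b - a⟫ ≤ f b := by
  set d := b - a with hd
  have hu : ConvexOn ℝ univ (fun t : ℝ => f (a + t • d)) := by
    have h0 := hc.comp_affineMap (AffineMap.lineMap a b : ℝ →ᵃ[ℝ] EuclideanSpace ℝ (Fin n))
    have harg : ∀ t : ℝ, a + t • d
        = (AffineMap.lineMap a b : ℝ →ᵃ[ℝ] EuclideanSpace ℝ (Fin n)) t := by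
      intro t
      rw [AffineMap.lineMap_apply_module, hd]
      module
    have heq : (fun t : ℝ => f (a + t • d))
        = f ∘ (AffineMap.lineMap a b : ℝ →ᵃ[ℝ] EuclideanSpace ℝ (Fin n)) := by
      funext t
      rw [Function.comp_apply, harg t]
    rw [heq]
    simpa using h0
  have hder := line_hasDerivAt f hf a d 0
  have hslope := hu.le_slope_of_hasDerivAt (mem_univ (0:ℝ)) (mem_univ (1:ℝ)) one_pos hder
  rw [slope_def_field] at hslope
  have eb : a + (1:ℝ) • d = b := by rw [one_smul, hd]; abel
  have ea : a + (0:ℝ) • d = a := by rw [zero_smul, add_zero]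
  simp only [eb, ea] at hslope
  have e10 : (1:ℝ) - 0 = 1 := by norm_num
  rw [e10, div_one] at hslope
  linarith

/-- Lower bound for smooth convex functions. -/
private lemma convex_smooth_ineq (f : EuclideanSpace ℝ (Fin n) → ℝ) (hf : ContDiff ℝ 1 f)
    (hc : ConvexOn ℝ univ f) (M : ℝ) (hM : 0 < M)
    (hLip : ∀ x y, ‖gradient f x - gradient f y‖ ≤ M * ‖x - y‖)
    (x y : EuclideanSpace ℝ (Fin n)) :
    f x + ⟪gradient f x, y - x⟫ + 1 / (2 * M) * ‖gradient f y - gradient f x‖ ^ 2 ≤ f y := by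
  set Δ := gradient f y - gradient f x with hΔ
  set z := y - (1 / M) • Δ with hz
  have h1 := convex_grad_ineq f (hf.differentiable one_ne_zero) hc x z
  have h2 := descent f hf M hLip y z
  have e1 : ⟪gradient f x, z - x⟫
      = ⟪gradient f x, y - x⟫ - (1 / M) * ⟪gradient f x, Δ⟫ := by
    rw [hz, show y - (1 / M) • Δ - x = (y - x) - (1/M) • Δ by abel]
    rw [inner_sub_right, real_inner_smul_right]
  have e2 : ⟪gradient f y, z - y⟫ = -((1 / M) * ⟪gradient f y, Δ⟫) := by
    rw [hz, show y - (1 / M) • Δ - y = -((1/M) • Δ) by abel, inner_neg_right,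
      real_inner_smul_right]
  have e3 : ‖z - y‖ ^ 2 = (1 / M) ^ 2 * ‖Δ‖ ^ 2 := by
    rw [hz, show y - (1 / M) • Δ - y = -((1/M) • Δ) by abel, norm_neg, norm_smul]
    rw [Real.norm_eq_abs, abs_of_nonneg (by positivity : (0:ℝ) ≤ 1/M)]
    ring
  have e4 : ⟪gradient f y, Δ⟫ - ⟪gradient f x, Δ⟫ = ‖Δ‖ ^ 2 := by
    rw [← inner_sub_left, ← hΔ, real_inner_self_eq_norm_sq]
  have e4' : (1/M) * ⟪gradient f y, Δ⟫ - (1/M) * ⟪gradient f x, Δ⟫ = (1/M) * ‖Δ‖ ^ 2 := by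
    rw [← mul_sub, e4]
  rw [e1] at h1
  rw [e2, e3] at h2
  have key : 1 / (2 * M) * ‖Δ‖ ^ 2 ≤ (1 / M) * ‖Δ‖ ^ 2 - M / 2 * ((1 / M) ^ 2 * ‖Δ‖ ^ 2) := by
    have hq : M / 2 * ((1 / M) ^ 2 * ‖Δ‖ ^ 2) = 1 / (2 * M) * ‖Δ‖ ^ 2 := by
      field_simp
    have hq2 : (1 / M) * ‖Δ‖ ^ 2 = 2 * (1 / (2 * M) * ‖Δ‖ ^ 2) := by
      field_simp
    rw [hq, hq2]
    linarith
  linarith [h1, h2, e4', key]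

/-- Cocoercivity of the gradient of a smooth convex function. -/
private lemma cocoercivity (f : EuclideanSpace ℝ (Fin n) → ℝ) (hf : ContDiff ℝ 1 f)
    (hc : ConvexOn ℝ univ f) (M : ℝ) (hM : 0 < M)
    (hLip : ∀ x y, ‖gradient f x - gradient f y‖ ≤ M * ‖x - y‖)
    (x y : EuclideanSpace ℝ (Fin n)) :
    (1 / M) * ‖gradient f y - gradient f x‖ ^ 2 ≤ ⟪gradient f y - gradient f x, y - x⟫ := by
  have h1 := convex_smooth_ineq f hf hc M hM hLip x y
  have h2 := convex_smooth_ineq f hf hc M hM hLip y x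
  have e1 : ‖gradient f x - gradient f y‖ = ‖gradient f y - gradient f x‖ := norm_sub_rev _ _
  rw [e1] at h2
  have e2 : ⟪gradient f y, x - y⟫ = -⟪gradient f y, y - x⟫ := by
    rw [show x - y = -(y - x) by abel, inner_neg_right]
  rw [e2] at h2
  have e3 : ⟪gradient f y - gradient f x, y - x⟫
      = ⟪gradient f y, y - x⟫ - ⟪gradient f x, y - x⟫ := inner_sub_left _ _ _
  have e5 : (1:ℝ) / M = 1 / (2 * M) + 1 / (2 * M) := by
    field_simp
    ring
  rw [e5, e3, add_mul]
  linarith [h1, h2]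

end Aux

/-- If `h` is `L`-smooth and `σ`-hypoconvex with `-L < σ ≤ 0`, then for all `x, y`:
`h y ≥ h x + ⟪∇h x, y-x⟫ + (σL/(2(L+σ)))‖y-x‖² + (1/(2(L+σ)))‖∇h y - ∇h x‖²`. -/
theorem lower_bound_smooth_hypoconvex {n : ℕ} (h : EuclideanSpace ℝ (Fin n) → ℝ)
    (L σ : ℝ) (hσ1 : -L < σ) (hσ2 : σ ≤ 0)
    (hC1 : ContDiff ℝ 1 h)
    (hLip : ∀ x y, ‖gradient h x - gradient h y‖ ≤ L * ‖x - y‖)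
    (hhyp : ConvexOn ℝ Set.univ (fun x => h x - σ / 2 * ‖x‖ ^ 2)) :
    ∀ x y, h y ≥ h x + (inner ℝ (gradient h x) (y - x) : ℝ)
      + σ * L / (2 * (L + σ)) * ‖y - x‖ ^ 2
      + 1 / (2 * (L + σ)) * ‖gradient h y - gradient h x‖ ^ 2 := by
  intro x y
  set g : EuclideanSpace ℝ (Fin n) → ℝ := fun z => h z - σ / 2 * ‖z‖ ^ 2 with hgdef
  set M : ℝ := L - σ with hMdef
  have hL : 0 < L := by linarith
  have hM : 0 < M := by rw [hMdef]; linarith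
  have hLσ : 0 < L + σ := by linarith
  have hMne : L - σ ≠ 0 := by intro h0; rw [hMdef] at hM; linarith
  have hLσne : L + σ ≠ 0 := ne_of_gt hLσ
  -- gradient of g
  have hgradg : ∀ z, HasGradientAt g (gradient h z - σ • z) z := by
    intro z
    have hh : HasFDerivAt h (InnerProductSpace.toDual ℝ _ (gradient h z)) z :=
      ((hC1.differentiable one_ne_zero) z).hasGradientAt
    have hq : HasFDerivAt (fun w : EuclideanSpace ℝ (Fin n) => σ / 2 * ‖w‖ ^ 2)
        (InnerProductSpace.toDual ℝ _ (σ • z)) z := by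
      have h1 : HasFDerivAt (fun w : EuclideanSpace ℝ (Fin n) => ‖w‖ ^ 2)
          (2 • (innerSL ℝ z)) z := (hasStrictFDerivAt_norm_sq z).hasFDerivAt
      have h2 : HasFDerivAt (fun w : EuclideanSpace ℝ (Fin n) => σ / 2 * ‖w‖ ^ 2)
          ((σ / 2) • 2 • (innerSL ℝ) z) z := h1.const_mul (σ / 2)
      refine h2.congr_fderiv ?_
      ext w
      simp only [InnerProductSpace.toDual_apply_apply, ContinuousLinearMap.smul_apply,
        ContinuousLinearMap.coe_smul', Pi.smul_apply, innerSL_apply_apply, smul_eq_mul,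
        two_smul, ContinuousLinearMap.add_apply]
      rw [real_inner_smul_left]
      ring
    have hsub := hh.sub hq
    rw [← map_sub] at hsub
    exact hsub
  have hgradg' : ∀ z, gradient g z = gradient h z - σ • z := fun z => (hgradg z).gradient
  have hgC1 : ContDiff ℝ 1 g := hC1.sub (contDiff_const.mul (contDiff_norm_sq ℝ))
  have hgLip : ∀ a b, ‖gradient g a - gradient g b‖ ≤ M * ‖a - b‖ := by
    intro a b
    rw [hgradg', hgradg']
    have e : gradient h a - σ • a - (gradient h b - σ • b)
        = (gradient h a - gradient h b) + (-σ) • (a - b) := by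
      rw [smul_sub]
      module
    rw [e]
    calc ‖(gradient h a - gradient h b) + (-σ) • (a - b)‖
        ≤ ‖gradient h a - gradient h b‖ + ‖(-σ) • (a - b)‖ := norm_add_le _ _
      _ ≤ L * ‖a - b‖ + (-σ) * ‖a - b‖ := by
          have hl := hLip a b
          have h2 : ‖(-σ) • (a - b)‖ = (-σ) * ‖a - b‖ := by
            rw [norm_smul, Real.norm_eq_abs, abs_of_nonneg (by linarith)]
          linarith
      _ = M * ‖a - b‖ := by rw [hMdef]; ring
  -- main inequalities
  have hA := convex_smooth_ineq g hgC1 hhyp M hM hgLip x y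
  have hB := cocoercivity g hgC1 hhyp M hM hgLip x y
  set d := y - x with hdd
  set Δh := gradient h y - gradient h x with hΔh
  set Δ := Δh - σ • d with hΔ'
  have egrad : gradient g y - gradient g x = Δ := by
    rw [hgradg', hgradg', hΔ', hΔh, hdd, smul_sub]
    abel
  rw [egrad] at hA hB
  -- translate hA into h-language
  have id1 : ‖y‖ ^ 2 = ‖x‖ ^ 2 + 2 * ⟪x, d⟫ + ‖d‖ ^ 2 := by
    have hy' : y = x + d := by rw [hdd]; abel
    rw [hy', @norm_add_sq_real]
  have id2 : ⟪gradient g x, d⟫ = ⟪gradient h x, d⟫ - σ * ⟪x, d⟫ := by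
    rw [hgradg', inner_sub_left, real_inner_smul_left]
  have hgx : g x = h x - σ / 2 * ‖x‖ ^ 2 := rfl
  have hgy : g y = h y - σ / 2 * ‖y‖ ^ 2 := rfl
  rw [id2, hgx, hgy, id1] at hA
  have hAh : h x + ⟪gradient h x, d⟫ + σ / 2 * ‖d‖ ^ 2 + 1 / (2 * M) * ‖Δ‖ ^ 2 ≤ h y := by
    nlinarith [hA]
  -- expand ‖Δh‖²
  have id3 : ‖Δh‖ ^ 2 = ‖Δ‖ ^ 2 + 2 * σ * ⟪Δ, d⟫ + σ ^ 2 * ‖d‖ ^ 2 := by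
    have hΔh' : Δh = Δ + σ • d := by rw [hΔ']; abel
    rw [hΔh', @norm_add_sq_real, real_inner_smul_right, norm_smul, Real.norm_eq_abs]
    rw [mul_pow, sq_abs]
    ring
  -- comparison of the two quadratic lower bounds
  have key : 0 ≤ (-σ) * (M * ⟪Δ, d⟫ - ‖Δ‖ ^ 2) := by
    apply mul_nonneg (by linarith)
    rw [one_div] at hB
    rw [inv_mul_le_iff₀ hM] at hB
    linarith
  have expand : σ / 2 * ‖d‖ ^ 2 + 1 / (2 * M) * ‖Δ‖ ^ 2
      - (σ * L / (2 * (L + σ)) * ‖d‖ ^ 2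
        + 1 / (2 * (L + σ)) * (‖Δ‖ ^ 2 + 2 * σ * ⟪Δ, d⟫ + σ ^ 2 * ‖d‖ ^ 2))
      = (-σ) * (M * ⟪Δ, d⟫ - ‖Δ‖ ^ 2) / (M * (L + σ)) := by
    rw [hMdef]
    field_simp
    ring
  have hnn : 0 ≤ (-σ) * (M * ⟪Δ, d⟫ - ‖Δ‖ ^ 2) / (M * (L + σ)) :=
    div_nonneg key (by positivity)
  have hfrac : σ * L / (2 * (L + σ)) * ‖d‖ ^ 2 + 1 / (2 * (L + σ)) * ‖Δh‖ ^ 2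
      ≤ σ / 2 * ‖d‖ ^ 2 + 1 / (2 * M) * ‖Δ‖ ^ 2 := by
    rw [id3]
    linarith [expand, hnn]
  rw [ge_iff_le]
  linarith [hAh, hfrac]
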